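/- For any reduced fraction p/q with q odd and positive, there exist a unique integer r and a unique even-length sequence of nonzero even integers a_1, ..., a_k such that p/q = r + [a_1, a_2, ..., a_k] (continued fraction), and moreover p and r have the same parity. -/

import Mathlib

/-- The continued fraction `[a_1, ..., a_k] = 1/(a_1 + 1/(a_2 + ⋯ + 1/a_k))`,
evaluated in `ℚ`. -/
def cf (l : List ℤ) : ℚ := l.foldr (fun a r => 1 / ((a : ℚ) + r)) 0

lemma cf_nil : cf [] = 0 := rfl
lemma cf_cons (a : ℤ) (l : List ℤ) : cf (a :: l) = 1 / ((a:ℚ) + cf l) := rfl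

/-- even numerator / odd denominator, absolute value < 1 -/
def AA (x : ℚ) : Prop := ∃ c d : ℤ, IsCoprime c d ∧ 0 < d ∧ Even c ∧ Odd d ∧ |c| < d ∧ x = c / d
/-- odd numerator / even denominator, absolute value < 1 -/
def BB (x : ℚ) : Prop := ∃ c d : ℤ, IsCoprime c d ∧ 0 < d ∧ Odd c ∧ Even d ∧ |c| < d ∧ x = c / d

lemma two_le_abs_of_even_ne (a : ℤ) (h0 : a ≠ 0) (he : Even a) : 2 ≤ |a| := by
  obtain ⟨k, rfl⟩ := he; rcases abs_cases (k + k) with ⟨h, _⟩ | ⟨h, _⟩ <;> omega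

lemma abs_q_lt_one {c d : ℤ} (hd : 0 < d) (h : |c| < d) : |((c:ℚ)/d)| < 1 := by
  have hd' : (0:ℚ) < d := by exact_mod_cast hd
  rw [abs_div, abs_of_pos hd', div_lt_one hd']
  have : ((|c| : ℤ) : ℚ) < d := by exact_mod_cast h
  simpa using this

lemma denom_big {a d c : ℤ} (ha : 2 ≤ |a|) (hd : 0 < d) (hc : |c| < d) : d < |a*d + c| := by
  have h1 : |a*d| = |a| * d := by rw [abs_mul, abs_of_pos hd]
  have h2 : |a*d| ≤ |a*d + c| + |c| := by simpa using abs_add_le (a*d + c) (-c)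
  have h3 : 2 * d ≤ |a| * d := by nlinarith
  omega

lemma inv_eq {a c d : ℤ} (hd : (d:ℚ) ≠ 0) :
    1 / ((a:ℚ) + (c:ℚ)/(d:ℚ)) = (d:ℚ) / ((a*d + c : ℤ) : ℚ) := by
  have h1 : (a:ℚ) + (c:ℚ)/(d:ℚ) = ((a*d + c : ℤ) : ℚ)/(d:ℚ) := by
    push_cast; field_simp
  rw [h1, one_div_div]

lemma A_abs_lt {x : ℚ} (hx : AA x) : |x| < 1 := by
  obtain ⟨c, d, _, hd, _, _, hcd, rfl⟩ := hx; exact abs_q_lt_one hd hcd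

lemma B_abs_lt {x : ℚ} (hx : BB x) : |x| < 1 := by
  obtain ⟨c, d, _, hd, _, _, hcd, rfl⟩ := hx; exact abs_q_lt_one hd hcd

lemma add_ne_zero_abs {a : ℤ} {x : ℚ} (ha : 2 ≤ |a|) (hx : |x| < 1) : (a:ℚ) + x ≠ 0 := by
  intro h
  have h1 : (a:ℚ) = -x := by linarith [h]
  have h2 : |(a:ℚ)| < 1 := by rw [h1, abs_neg]; exact hx
  have h3 : (2:ℚ) ≤ |(a:ℚ)| := by
    have h4 : ((|a| : ℤ) : ℚ) = |(a:ℚ)| := by push_cast; rfl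
    rw [← h4]; exact_mod_cast ha
  linarith

lemma step_main {a c d : ℤ} (ha0 : a ≠ 0) (hae : Even a) (hcop : IsCoprime c d)
    (hd : 0 < d) (hcd : |c| < d) :
    ∃ c' d' : ℤ, IsCoprime c' d' ∧ 0 < d' ∧ |c'| < d' ∧ (c' = d ∨ c' = -d) ∧
      (Even (a*d + c) → Even d') ∧ (Odd (a*d + c) → Odd d') ∧
      1 / ((a:ℚ) + (c:ℚ)/(d:ℚ)) = (c':ℚ) / (d':ℚ) := by
  have ha2 := two_le_abs_of_even_ne a ha0 hae
  have hde : d < |a*d + c| := denom_big ha2 hd hcd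
  have hdq : (d:ℚ) ≠ 0 := by exact_mod_cast hd.ne'
  have hcop' : IsCoprime d (a*d + c) := by
    have := (hcop.symm).add_mul_left_right a
    have h : c + d * a = a * d + c := by ring
    rwa [h] at this
  have hval := inv_eq (a := a) (c := c) (d := d) hdq
  rcases lt_or_gt_of_ne (by intro h; rw [h] at hde; simp at hde; omega : a*d+c ≠ 0) with he | he
  · have hde' : d < -(a*d+c) := by rwa [abs_of_neg he] at hde
    refine ⟨-d, -(a*d+c), hcop'.neg_left.neg_right, by omega, by rw [abs_neg, abs_of_pos hd]; omega,
      Or.inr rfl, fun h => h.neg, fun h => h.neg, ?_⟩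
    rw [hval]; push_cast; rw [neg_div_neg_eq]
  · have hde' : d < a*d+c := by rwa [abs_of_pos he] at hde
    refine ⟨d, a*d+c, hcop', by omega, by rw [abs_of_pos hd]; omega, Or.inl rfl,
      fun h => h, fun h => h, hval⟩

lemma stepA {x : ℚ} {a : ℤ} (ha0 : a ≠ 0) (hae : Even a) (hx : AA x) : BB (1/((a:ℚ) + x)) := by
  obtain ⟨c, d, hcop, hd, hce, hdo, hcd, rfl⟩ := hx
  obtain ⟨c', d', h1, h2, h3, h4, h5, h6, h7⟩ := step_main ha0 hae hcop hd hcd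
  exact ⟨c', d', h1, h2, by rcases h4 with h|h <;> simp [h, hdo, hdo.neg],
    h5 ((hae.mul_right d).add hce), h3, h7⟩

lemma stepB {x : ℚ} {a : ℤ} (ha0 : a ≠ 0) (hae : Even a) (hx : BB x) : AA (1/((a:ℚ) + x)) := by
  obtain ⟨c, d, hcop, hd, hco, hde, hcd, rfl⟩ := hx
  obtain ⟨c', d', h1, h2, h3, h4, h5, h6, h7⟩ := step_main ha0 hae hcop hd hcd
  refine ⟨c', d', h1, h2, by rcases h4 with h|h <;> simp [h, hde, hde.neg], h6 ?_, h3, h7⟩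
  exact Even.add_odd (hae.mul_right d) hco

lemma cf_class : ∀ l : List ℤ, (∀ a ∈ l, a ≠ 0 ∧ Even a) →
    (Even l.length → AA (cf l)) ∧ (¬ Even l.length → BB (cf l)) := by
  intro l
  induction l with
  | nil =>
    intro _
    refine ⟨fun _ => ⟨0, 1, isCoprime_zero_left.mpr isUnit_one, one_pos, Even.zero, odd_one,
      by norm_num, by norm_num [cf_nil]⟩, fun h => absurd (by simp) h⟩
  | cons a t ih =>
    intro hg
    have hat := hg a (by simp)
    have ht := ih (fun b hb => hg b (by simp [hb]))
    constructor
    · intro hev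
      have : ¬ Even t.length := by
        rw [List.length_cons, Nat.even_add_one] at hev; exact hev
      rw [cf_cons]; exact stepB hat.1 hat.2 (ht.2 this)
    · intro hodd
      have : Even t.length := by
        rw [List.length_cons, Nat.even_add_one, not_not] at hodd; exact hodd
      rw [cf_cons]; exact stepA hat.1 hat.2 (ht.1 this)

lemma cf_abs_lt_one {l : List ℤ} (hg : ∀ a ∈ l, a ≠ 0 ∧ Even a) : |cf l| < 1 := by
  rcases Nat.even_or_odd l.length with h | h
  · exact A_abs_lt ((cf_class l hg).1 h)
  · exact B_abs_lt ((cf_class l hg).2 (Nat.not_even_iff_odd.mpr h))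

lemma cf_cons_ne_zero {a : ℤ} {t : List ℤ} (hg : ∀ b ∈ a :: t, b ≠ 0 ∧ Even b) :
    cf (a :: t) ≠ 0 := by
  have hat := hg a (by simp)
  have ht : ∀ b ∈ t, b ≠ 0 ∧ Even b := fun b hb => hg b (by simp [hb])
  rw [cf_cons]
  exact one_div_ne_zero (add_ne_zero_abs (two_le_abs_of_even_ne a hat.1 hat.2) (cf_abs_lt_one ht))

lemma cross_eq {n c d c' d' : ℤ} (hd : 0 < d) (hd' : 0 < d')
    (heq : (n:ℚ) = (c:ℚ)/d - (c':ℚ)/d') : n * (d * d') = c * d' - c' * d := by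
  have hdq : (d:ℚ) ≠ 0 := by exact_mod_cast hd.ne'
  have hdq' : (d':ℚ) ≠ 0 := by exact_mod_cast hd'.ne'
  have h2 : ((n * (d * d') : ℤ) : ℚ) = ((c * d' - c' * d : ℤ) : ℚ) := by
    push_cast
    rw [heq]
    field_simp
  exact_mod_cast h2

lemma diff_small {n c d c' d' : ℤ} (hd : 0 < d) (hd' : 0 < d') (hc : |c| < d) (hc' : |c'| < d')
    (hn : Even n) (heq : (n:ℚ) = (c:ℚ)/d - (c':ℚ)/d') : n = 0 ∧ (c:ℚ)/d = (c':ℚ)/d' := by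
  have h3 := cross_eq hd hd' heq
  rcases eq_or_ne n 0 with rfl | hn0
  · exact ⟨rfl, by linarith [heq, (by push_cast; ring_nf : ((0:ℤ):ℚ) = (0:ℚ))]⟩
  · exfalso
    have h4 : 2 ≤ |n| := two_le_abs_of_even_ne n hn0 hn
    have h5 : |n * (d*d')| = |n| * (d*d') := by rw [abs_mul, abs_of_pos (mul_pos hd hd')]
    have h6 : |c * d' - c' * d| ≤ |c| * d' + |c'| * d := by
      calc |c * d' - c' * d| ≤ |c * d'| + |c' * d| := abs_sub _ _
        _ = |c| * d' + |c'| * d := by rw [abs_mul, abs_mul, abs_of_pos hd, abs_of_pos hd']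
    have h7 : |n * (d*d')| = |c * d' - c' * d| := by rw [h3]
    nlinarith [mul_le_mul_of_nonneg_right h4 (mul_pos hd hd').le,
      mul_le_mul_of_nonneg_right (show |c| ≤ d - 1 by omega) hd'.le,
      mul_le_mul_of_nonneg_right (show |c'| ≤ d' - 1 by omega) hd.le]

lemma repr_of {x : ℚ} (hx : AA x ∨ BB x) :
    ∃ c d : ℤ, 0 < d ∧ |c| < d ∧ x = (c:ℚ)/d := by
  rcases hx with ⟨c,d,_,hd,_,_,hcd,rfl⟩ | ⟨c,d,_,hd,_,_,hcd,rfl⟩ <;> exact ⟨c,d,hd,hcd,rfl⟩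

lemma add_unique {a a' : ℤ} {x x' : ℚ} (hn : Even (a - a')) (hx : AA x ∨ BB x)
    (hx' : AA x' ∨ BB x') (heq : (a:ℚ) + x = (a':ℚ) + x') : a = a' ∧ x = x' := by
  obtain ⟨c, d, hd, hcd, rfl⟩ := repr_of hx
  obtain ⟨c', d', hd', hcd', rfl⟩ := repr_of hx'
  have heq2 : ((a' - a : ℤ) : ℚ) = (c:ℚ)/d - (c':ℚ)/d' := by push_cast; linarith
  have := diff_small hd hd' hcd hcd' (by simpa using hn.neg) heq2
  exact ⟨by omega, by linarith [heq, this.2]⟩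

lemma AA_add_unique {r r' : ℤ} {x x' : ℚ} (hx : AA x) (hx' : AA x')
    (heq : (r:ℚ) + x = (r':ℚ) + x') : r = r' ∧ x = x' := by
  obtain ⟨c, d, hcop, hd, hce, hdo, hcd, rfl⟩ := hx
  obtain ⟨c', d', hcop', hd', hce', hdo', hcd', rfl⟩ := hx'
  have heq2 : ((r' - r : ℤ) : ℚ) = (c:ℚ)/d - (c':ℚ)/d' := by push_cast; linarith
  have h3 := cross_eq hd hd' heq2
  have hrhs : Even (c * d' - c' * d) := (hce.mul_right d').sub (hce'.mul_right d)
  have hev : Even (r' - r) := by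
    rcases Int.even_mul.mp (h3 ▸ hrhs) with h | h
    · exact h
    · exact absurd h (by rw [Int.not_even_iff_odd]; exact hdo.mul hdo')
  have := diff_small hd hd' hcd hcd' hev heq2
  exact ⟨by omega, by linarith [heq, this.2]⟩

lemma cf_inj : ∀ n : ℕ, ∀ l l' : List ℤ, l.length ≤ n →
    (∀ a ∈ l, a ≠ 0 ∧ Even a) → (∀ a ∈ l', a ≠ 0 ∧ Even a) →
    (Even l.length ↔ Even l'.length) → cf l = cf l' → l = l' := by
  intro n
  induction n with
  | zero =>
    intro l l' hlen hg hg' _ hcf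
    have hl : l = [] := List.length_eq_zero_iff.mp (by omega)
    subst hl
    cases l' with
    | nil => rfl
    | cons a t => exact absurd hcf.symm (cf_cons_ne_zero hg')
  | succ n ih =>
    intro l l' hlen hg hg' hpar hcf
    cases l with
    | nil =>
      cases l' with
      | nil => rfl
      | cons a t => exact absurd hcf.symm (cf_cons_ne_zero hg')
    | cons a t =>
      cases l' with
      | nil => exact absurd hcf (cf_cons_ne_zero hg)
      | cons a' t' =>
        have hat := hg a (by simp)
        have hat' := hg' a' (by simp)
        have hgt : ∀ b ∈ t, b ≠ 0 ∧ Even b := fun b hb => hg b (by simp [hb])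
        have hgt' : ∀ b ∈ t', b ≠ 0 ∧ Even b := fun b hb => hg' b (by simp [hb])
        have hne : ((a:ℚ) + cf t) ≠ 0 :=
          add_ne_zero_abs (two_le_abs_of_even_ne a hat.1 hat.2) (cf_abs_lt_one hgt)
        have hne' : ((a':ℚ) + cf t') ≠ 0 :=
          add_ne_zero_abs (two_le_abs_of_even_ne a' hat'.1 hat'.2) (cf_abs_lt_one hgt')
        rw [cf_cons, cf_cons, one_div, one_div] at hcf
        have heq : (a:ℚ) + cf t = (a':ℚ) + cf t' := inv_injective hcf
        have hxt : AA (cf t) ∨ BB (cf t) := by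
          rcases Nat.even_or_odd t.length with h | h
          · exact Or.inl ((cf_class t hgt).1 h)
          · exact Or.inr ((cf_class t hgt).2 (Nat.not_even_iff_odd.mpr h))
        have hxt' : AA (cf t') ∨ BB (cf t') := by
          rcases Nat.even_or_odd t'.length with h | h
          · exact Or.inl ((cf_class t' hgt').1 h)
          · exact Or.inr ((cf_class t' hgt').2 (Nat.not_even_iff_odd.mpr h))
        obtain ⟨haa, hcc⟩ := add_unique (hat.2.sub hat'.2) hxt hxt' heq
        have hpar' : Even t.length ↔ Even t'.length := by
          rw [List.length_cons, List.length_cons, Nat.even_add_one, Nat.even_add_one] at hpar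
          tauto
        have := ih t t' (by simp only [List.length_cons] at hlen; omega) hgt hgt' hpar' hcc
        rw [haa, this]

lemma exists_even_a {c d : ℤ} (hc0 : c ≠ 0) (hcop : IsCoprime c d) (h : Even c ∨ Even d) :
    ∃ a : ℤ, Even a ∧ |d - a * c| < |c| := by
  set m := |c| with hm
  have hm0 : 0 < m := abs_pos.mpr hc0
  set q0 := d / m with hq0
  set r0 := d % m with hr0
  have hdiv : m * q0 + r0 = d := Int.mul_ediv_add_emod d m
  have hr0n : 0 ≤ r0 := Int.emod_nonneg d hm0.ne'
  have hr0l : r0 < m := Int.emod_lt_of_pos d hm0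
  have key : ∃ b : ℤ, Even b ∧ |d - b * m| < m := by
    rcases Int.even_or_odd q0 with hev | hodd
    · have e1 : d - q0 * m = r0 := by rw [← hdiv]; ring
      exact ⟨q0, hev, by rw [e1, abs_lt]; omega⟩
    · have hr0ne : r0 ≠ 0 := by
        intro h0
        have hmd : m ∣ d := Int.dvd_of_emod_eq_zero h0
        have hcd : c ∣ d := (abs_dvd c d).mp hmd
        have hu : IsUnit c := hcop.isUnit_of_dvd hcd
        have hc1 : c = 1 ∨ c = -1 := Int.isUnit_iff.mp hu
        have hm1 : m = 1 := by rcases hc1 with rfl | rfl <;> simp [hm]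
        rw [hm1] at hdiv
        rcases h with hce | hde
        · rcases hc1 with rfl | rfl <;> simp_all
        · have : q0 = d := by omega
          rw [this] at hodd
          exact (Int.not_even_iff_odd.mpr hodd) hde
      have e2 : d - (q0 + 1) * m = r0 - m := by rw [← hdiv]; ring
      refine ⟨q0 + 1, ?_, by rw [e2, abs_lt]; omega⟩
      obtain ⟨k, hk⟩ := hodd; exact ⟨k+1, by omega⟩
  obtain ⟨b, hbe, hb⟩ := key
  rcases abs_cases c with ⟨hc, _⟩ | ⟨hc, _⟩
  · exact ⟨b, hbe, by rwa [← hc, ← hm]⟩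
  · refine ⟨-b, hbe.neg, ?_⟩
    have e3 : -b * c = b * m := by rw [hm, hc]; ring
    rwa [e3]

lemma ex_aux : ∀ n : ℕ, ∀ c d : ℤ, d.natAbs ≤ n → IsCoprime c d → 0 < d → |c| < d →
    (Even c → Odd d → ∃ l : List ℤ, Even l.length ∧ (∀ a ∈ l, a ≠ 0 ∧ Even a) ∧ cf l = (c:ℚ)/d) ∧
    (Odd c → Even d → ∃ l : List ℤ, ¬ Even l.length ∧ (∀ a ∈ l, a ≠ 0 ∧ Even a) ∧ cf l = (c:ℚ)/d) := by
  intro n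
  induction n with
  | zero => intro c d hn _ hd _; exfalso; omega
  | succ n ih =>
    intro c d hn hcop hd hcd
    have hcd2 : (c.natAbs : ℤ) < d := by rwa [Int.abs_eq_natAbs] at hcd
    have step : ∀ a : ℤ, Even a → |d - a * c| < |c| → c ≠ 0 →
        (a ≠ 0 ∧ IsCoprime (d - a*c) c ∧
          (∀ y : ℚ, y = ((d - a*c : ℤ):ℚ)/(c:ℚ) → 1/((a:ℚ) + y) = (c:ℚ)/(d:ℚ))) := by
      intro a hae hab hc0
      refine ⟨?_, ?_, ?_⟩
      · rintro rfl
        simp only [zero_mul, sub_zero] at hab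
        rw [abs_of_pos hd] at hab
        omega
      · have h1 := hcop.symm.add_mul_left_left (-a)
        have h2 : d + c * (-a) = d - a * c := by ring
        rwa [h2] at h1
      · intro y hy
        subst hy
        have hcq : (c:ℚ) ≠ 0 := by exact_mod_cast hc0
        rw [inv_eq hcq]
        have h3 : a * c + (d - a * c) = d := by ring
        rw [h3]
    constructor
    · intro hce hdo
      rcases eq_or_ne c 0 with rfl | hc0
      · have hu : IsUnit d := isCoprime_zero_left.mp hcop
        have hd1 : d = 1 := by rcases Int.isUnit_iff.mp hu with h|h <;> omega
        exact ⟨[], by simp, by simp, by rw [hd1]; norm_num [cf_nil]⟩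
      · obtain ⟨a, hae, hab⟩ := exists_even_a hc0 hcop (Or.inl hce)
        obtain ⟨ha0, hcop2, hval⟩ := step a hae hab hc0
        have heo : Odd (d - a*c) := by
          obtain ⟨j, hj⟩ := hae.mul_right c
          obtain ⟨k, hk⟩ := hdo
          exact ⟨k - j, by omega⟩
        have hnat : c.natAbs ≤ n := by omega
        rcases lt_or_gt_of_ne hc0 with hcneg | hcpos
        · obtain ⟨l', hl1, hl2, hl3⟩ := (ih (-(d - a*c)) (-c) (by omega) hcop2.neg_left.neg_right
            (by omega) (by rw [abs_neg]; rwa [abs_of_neg hcneg] at hab)).2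
            heo.neg hce.neg
          refine ⟨a :: l', by simp [Nat.even_add_one, hl1], ?_, ?_⟩
          · intro b hb
            rcases List.mem_cons.mp hb with rfl | hb
            · exact ⟨ha0, hae⟩
            · exact hl2 b hb
          · rw [cf_cons, hval (cf l') ?_]
            rw [hl3]; push_cast; rw [neg_div_neg_eq]
        · obtain ⟨l', hl1, hl2, hl3⟩ := (ih (d - a*c) c (by omega) hcop2 hcpos
            (by rwa [abs_of_pos hcpos] at hab)).2 heo hce
          refine ⟨a :: l', by simp [Nat.even_add_one, hl1], ?_, ?_⟩
          · intro b hb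
            rcases List.mem_cons.mp hb with rfl | hb
            · exact ⟨ha0, hae⟩
            · exact hl2 b hb
          · rw [cf_cons, hval (cf l') hl3]
    · intro hco hde
      have hc0 : c ≠ 0 := by rintro rfl; exact (Int.not_odd_iff_even.mpr Even.zero) hco
      obtain ⟨a, hae, hab⟩ := exists_even_a hc0 hcop (Or.inr hde)
      obtain ⟨ha0, hcop2, hval⟩ := step a hae hab hc0
      have hee : Even (d - a*c) := by
        obtain ⟨j, hj⟩ := hae.mul_right c
        obtain ⟨k, hk⟩ := hde
        exact ⟨k - j, by omega⟩
      have hnat : c.natAbs ≤ n := by omega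
      rcases lt_or_gt_of_ne hc0 with hcneg | hcpos
      · obtain ⟨l', hl1, hl2, hl3⟩ := (ih (-(d - a*c)) (-c) (by omega) hcop2.neg_left.neg_right
          (by omega) (by rw [abs_neg]; rwa [abs_of_neg hcneg] at hab)).1
          hee.neg hco.neg
        refine ⟨a :: l', by simp [Nat.even_add_one, hl1], ?_, ?_⟩
        · intro b hb
          rcases List.mem_cons.mp hb with rfl | hb
          · exact ⟨ha0, hae⟩
          · exact hl2 b hb
        · rw [cf_cons, hval (cf l') ?_]
          rw [hl3]; push_cast; rw [neg_div_neg_eq]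
      · obtain ⟨l', hl1, hl2, hl3⟩ := (ih (d - a*c) c (by omega) hcop2 hcpos
          (by rwa [abs_of_pos hcpos] at hab)).1 hee hco
        refine ⟨a :: l', by simp [Nat.even_add_one, hl1], ?_, ?_⟩
        · intro b hb
          rcases List.mem_cons.mp hb with rfl | hb
          · exact ⟨ha0, hae⟩
          · exact hl2 b hb
        · rw [cf_cons, hval (cf l') hl3]

lemma exists_r (p q : ℤ) (hq : Odd q) (hq0 : 0 < q) :
    ∃ r : ℤ, Even (p - r * q) ∧ |p - r * q| < q := by
  set q1 := p / q with hq1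
  set r0 := p % q with hr0
  have hdiv : q * q1 + r0 = p := Int.mul_ediv_add_emod p q
  have hr0n : 0 ≤ r0 := Int.emod_nonneg p hq0.ne'
  have hr0l : r0 < q := Int.emod_lt_of_pos p hq0
  rcases Int.even_or_odd r0 with hev | hodd
  · have e1 : p - q1 * q = r0 := by rw [← hdiv]; ring
    exact ⟨q1, by rw [e1]; exact hev, by rw [e1, abs_lt]; omega⟩
  · have e2 : p - (q1 + 1) * q = r0 - q := by rw [← hdiv]; ring
    obtain ⟨k, hk⟩ := hodd
    refine ⟨q1 + 1, by rw [e2]; exact Odd.sub_odd ⟨k, hk⟩ hq, by rw [e2, abs_lt]; omega⟩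

theorem unique_even_continued_fraction (p q : ℤ) (hq : Odd q) (hq0 : 0 < q)
    (hpq : IsCoprime p q) :
    (∃! rl : ℤ × List ℤ,
      Even rl.2.length ∧ (∀ a ∈ rl.2, a ≠ 0 ∧ Even a) ∧
        (p : ℚ) / q = (rl.1 : ℚ) + cf rl.2) ∧
    ∀ (r : ℤ) (l : List ℤ), Even l.length → (∀ a ∈ l, a ≠ 0 ∧ Even a) →
      (p : ℚ) / q = (r : ℚ) + cf l → (Even p ↔ Even r) := by
  have hqq : (q:ℚ) ≠ 0 := by exact_mod_cast hq0.ne'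
  constructor
  · -- existence and uniqueness
    obtain ⟨r, hre, hrb⟩ := exists_r p q hq hq0
    have hcops : IsCoprime (p - r * q) q := by
      have h1 := hpq.add_mul_left_left (-r)
      have h2 : p + q * (-r) = p - r * q := by ring
      rwa [h2] at h1
    obtain ⟨l, hl1, hl2, hl3⟩ := (ex_aux q.natAbs (p - r*q) q le_rfl hcops hq0 hrb).1 hre hq
    have heq : (p:ℚ)/q = (r:ℚ) + cf l := by
      rw [hl3]; push_cast; field_simp
      ring
    refine ⟨(r, l), ⟨hl1, hl2, heq⟩, ?_⟩
    rintro ⟨r', l'⟩ ⟨hl1', hl2', heq'⟩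
    have hAA : AA (cf l) := (cf_class l hl2).1 hl1
    have hAA' : AA (cf l') := (cf_class l' hl2').1 hl1'
    have heq2 : (r':ℚ) + cf l' = (r:ℚ) + cf l := by rw [← heq, ← heq']
    obtain ⟨hr, hcc⟩ := AA_add_unique hAA' hAA heq2
    have hll : l' = l := cf_inj l'.length l' l le_rfl hl2' hl2 (iff_of_true hl1' hl1) hcc
    simp [hr, hll]
  · -- parity
    intro r l hlen hgood heq
    obtain ⟨c, d, hcop, hd, hce, hdo, hcd, hx⟩ := (cf_class l hgood).1 hlen
    rw [hx] at heq
    have hdq : (d:ℚ) ≠ 0 := by exact_mod_cast hd.ne'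
    have key : p * d = (r*d + c) * q := by
      have h2 : ((p * d : ℤ):ℚ) = (((r*d + c) * q : ℤ):ℚ) := by
        push_cast
        field_simp at heq
        linarith [heq]
      exact_mod_cast h2
    have hdo' : ¬ Even d := Int.not_even_iff_odd.mpr hdo
    have hqo' : ¬ Even q := Int.not_even_iff_odd.mpr hq
    have h1 : Even (p*d) ↔ Even p := by rw [Int.even_mul]; simp [hdo']
    have h2 : Even ((r*d+c)*q) ↔ Even r := by
      rw [Int.even_mul, Int.even_add, Int.even_mul]
      simp [hdo', hqo', hce]
    rw [key, h2] at h1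
    exact h1.symm
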